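/- Let γ ∈ [0,1) and δ ∈ (0, (1−γ)/2] with ℓ := γ + 2δ ≤ 1. Define φ(A) = min(1, A)^{γ/2+δ} for A > 0 and ψ(x) = ∫₀^1 min(A, x)^ℓ (γ/2 + δ) A^{γ/2+δ−1} A^{γ/2−ℓ} dA for x > 0. Then there exists a constant C ≥ 1, depending only on γ and δ, such that C^{−1} min(1, x)^{γ+δ} ≤ ψ(x) ≤ C min(1, x)^{γ+δ} for all x > 0. -/

import Mathlib

open MeasureTheory

theorem stmt14 (γ δ : ℝ) (hγ : γ ∈ Set.Ico (0:ℝ) 1) (hδ : 0 < δ)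
    (hδ2 : δ ≤ (1 - γ) / 2) (hℓ : γ + 2 * δ ≤ 1) :
    ∃ C : ℝ, 1 ≤ C ∧ ∀ x : ℝ, 0 < x →
      C⁻¹ * min 1 x ^ (γ + δ) ≤
        (∫ A in Set.Ioo (0:ℝ) 1,
          min A x ^ (γ + 2 * δ) * ((γ / 2 + δ) * A ^ (γ / 2 + δ - 1))
            * A ^ (γ / 2 - (γ + 2 * δ))) ∧
      (∫ A in Set.Ioo (0:ℝ) 1,
          min A x ^ (γ + 2 * δ) * ((γ / 2 + δ) * A ^ (γ / 2 + δ - 1))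
            * A ^ (γ / 2 - (γ + 2 * δ)))
        ≤ C * min 1 x ^ (γ + δ) := by
  obtain ⟨hγ0, hγ1⟩ := hγ
  have hc : 0 < γ / 2 + δ := by linarith
  have hgd : 0 < γ + δ := by linarith
  have hCnn : (0:ℝ) ≤ (γ / 2 + δ) / δ := by positivity
  refine ⟨2 + (γ / 2 + δ) / δ, by linarith, ?_⟩
  have hCpos : (0:ℝ) < 2 + (γ / 2 + δ) / δ := by linarith
  have hCinv : (2 + (γ / 2 + δ) / δ)⁻¹ ≤ 1 / 2 := by
    rw [inv_le_comm₀ hCpos (by norm_num)]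
    linarith
  have hc_le : (γ / 2 + δ) / (γ + δ) ≤ 1 := by
    rw [div_le_one hgd]; linarith
  have hc_ge : (1:ℝ) / 2 ≤ (γ / 2 + δ) / (γ + δ) := by
    rw [div_le_div_iff₀ (by norm_num) hgd]; linarith
  intro x hx
  by_cases hx1 : 1 ≤ x
  · -- x ≥ 1 : min A x = A on (0,1)
    have heq : Set.EqOn
        (fun A : ℝ => min A x ^ (γ + 2 * δ) * ((γ / 2 + δ) * A ^ (γ / 2 + δ - 1))
            * A ^ (γ / 2 - (γ + 2 * δ)))
        (fun A : ℝ => (γ / 2 + δ) * A ^ (γ + δ - 1)) (Set.Ioo 0 1) := by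
      intro A hA
      have hA0 : (0:ℝ) < A := hA.1
      have hmin : min A x = A := min_eq_left (le_trans hA.2.le hx1)
      simp only [hmin]
      rw [show A ^ (γ + 2 * δ) * ((γ / 2 + δ) * A ^ (γ / 2 + δ - 1))
            * A ^ (γ / 2 - (γ + 2 * δ)) = (γ / 2 + δ) *
            (A ^ (γ + 2 * δ) * A ^ (γ / 2 + δ - 1) * A ^ (γ / 2 - (γ + 2 * δ))) by ring,
        ← Real.rpow_add hA0, ← Real.rpow_add hA0,
        show γ + 2 * δ + (γ / 2 + δ - 1) + (γ / 2 - (γ + 2 * δ)) = γ + δ - 1 by ring]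
    rw [setIntegral_congr_fun measurableSet_Ioo heq,
      show (∫ A in Set.Ioo (0:ℝ) 1, (γ / 2 + δ) * A ^ (γ + δ - 1))
        = ∫ A in (0:ℝ)..1, (γ / 2 + δ) * A ^ (γ + δ - 1) by
        rw [intervalIntegral.integral_of_le (by norm_num),
          MeasureTheory.integral_Ioc_eq_integral_Ioo],
      intervalIntegral.integral_const_mul, integral_rpow (Or.inl (by linarith))]
    have h0 : (0:ℝ) ^ (γ + δ - 1 + 1) = 0 := Real.zero_rpow (by linarith)
    have h1 : (1:ℝ) ^ (γ + δ - 1 + 1) = 1 := Real.one_rpow _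
    rw [h0, h1, min_eq_left hx1, Real.one_rpow]
    constructor
    · calc (2 + (γ / 2 + δ) / δ)⁻¹ * 1 ≤ 1 / 2 := by linarith
        _ ≤ (γ / 2 + δ) * ((1 - 0) / (γ + δ - 1 + 1)) := by
            rw [show γ + δ - 1 + 1 = γ + δ by ring]
            calc (1:ℝ)/2 ≤ (γ/2+δ)/(γ+δ) := hc_ge
              _ = (γ/2+δ) * ((1-0)/(γ+δ)) := by ring
    · calc (γ / 2 + δ) * ((1 - 0) / (γ + δ - 1 + 1))
          = (γ/2+δ)/(γ+δ) := by rw [show γ + δ - 1 + 1 = γ + δ by ring]; ring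
        _ ≤ 1 := hc_le
        _ ≤ (2 + (γ / 2 + δ) / δ) * 1 := by linarith
  · -- 0 < x < 1
    push_neg at hx1
    have hxle : x ≤ 1 := hx1.le
    -- rewrite as interval integral 0..1 and split at x
    have hIoo : (∫ A in Set.Ioo (0:ℝ) 1,
          min A x ^ (γ + 2 * δ) * ((γ / 2 + δ) * A ^ (γ / 2 + δ - 1))
            * A ^ (γ / 2 - (γ + 2 * δ)))
        = ∫ A in (0:ℝ)..1, min A x ^ (γ + 2 * δ) * ((γ / 2 + δ) * A ^ (γ / 2 + δ - 1))
            * A ^ (γ / 2 - (γ + 2 * δ)) := by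
      rw [intervalIntegral.integral_of_le (by norm_num),
        MeasureTheory.integral_Ioc_eq_integral_Ioo]
    set f : ℝ → ℝ := fun A => min A x ^ (γ + 2 * δ) * ((γ / 2 + δ) * A ^ (γ / 2 + δ - 1))
            * A ^ (γ / 2 - (γ + 2 * δ)) with hf
    have heq1 : Set.EqOn f (fun A : ℝ => (γ / 2 + δ) * A ^ (γ + δ - 1)) (Set.uIcc 0 x) := by
      intro A hA
      rw [Set.uIcc_of_le hx.le] at hA
      rcases eq_or_lt_of_le hA.1 with h0 | h0
      · simp only [hf, ← h0]
        rw [min_eq_left hx.le, Real.zero_rpow (by linarith : γ + 2*δ ≠ 0),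
          Real.zero_rpow (by linarith : γ + δ - 1 ≠ 0)]
        ring
      · simp only [hf]
        rw [min_eq_left hA.2,
          show A ^ (γ + 2 * δ) * ((γ / 2 + δ) * A ^ (γ / 2 + δ - 1))
            * A ^ (γ / 2 - (γ + 2 * δ)) = (γ / 2 + δ) *
            (A ^ (γ + 2 * δ) * A ^ (γ / 2 + δ - 1) * A ^ (γ / 2 - (γ + 2 * δ))) by ring,
          ← Real.rpow_add h0, ← Real.rpow_add h0,
          show γ + 2 * δ + (γ / 2 + δ - 1) + (γ / 2 - (γ + 2 * δ)) = γ + δ - 1 by ring]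
    have heq2 : Set.EqOn f
        (fun A : ℝ => (γ / 2 + δ) * x ^ (γ + 2 * δ) * A ^ (-δ - 1)) (Set.uIcc x 1) := by
      intro A hA
      rw [Set.uIcc_of_le hxle] at hA
      have hA0 : 0 < A := lt_of_lt_of_le hx hA.1
      simp only [hf]
      rw [min_eq_right hA.1,
        show x ^ (γ + 2 * δ) * ((γ / 2 + δ) * A ^ (γ / 2 + δ - 1))
          * A ^ (γ / 2 - (γ + 2 * δ)) = (γ / 2 + δ) * x ^ (γ + 2*δ) *
          (A ^ (γ / 2 + δ - 1) * A ^ (γ / 2 - (γ + 2 * δ))) by ring,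
        ← Real.rpow_add hA0,
        show γ / 2 + δ - 1 + (γ / 2 - (γ + 2 * δ)) = -δ - 1 by ring]
    have hi1 : IntervalIntegrable f volume 0 x :=
      ((intervalIntegral.intervalIntegrable_rpow' (by linarith : (-1:ℝ) < γ + δ - 1)).const_mul
        (γ / 2 + δ)).congr_ae <|
        Filter.eventuallyEq_of_mem (self_mem_ae_restrict measurableSet_uIoc)
          (fun A hA => (heq1 (Set.uIoc_subset_uIcc hA)).symm)
    have hi2 : IntervalIntegrable f volume x 1 :=
      ((intervalIntegral.intervalIntegrable_rpow (Or.inr (by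
          rw [Set.uIcc_of_le hxle]; intro h; exact absurd h.1 (not_le.mpr hx)))
        ).const_mul ((γ / 2 + δ) * x ^ (γ + 2 * δ))).congr_ae <|
        Filter.eventuallyEq_of_mem (self_mem_ae_restrict measurableSet_uIoc)
          (fun A hA => (heq2 (Set.uIoc_subset_uIcc hA)).symm)
    have hsplit : (∫ A in (0:ℝ)..1, f A) = (∫ A in (0:ℝ)..x, f A) + ∫ A in x..(1:ℝ), f A :=
      (intervalIntegral.integral_add_adjacent_intervals hi1 hi2).symm
    have hv1 : (∫ A in (0:ℝ)..x, f A) = (γ / 2 + δ) * (x ^ (γ + δ) / (γ + δ)) := by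
      rw [intervalIntegral.integral_congr heq1, intervalIntegral.integral_const_mul,
        integral_rpow (Or.inl (by linarith)), Real.zero_rpow (by linarith),
        show γ + δ - 1 + 1 = γ + δ by ring]
      ring
    have hv2 : (∫ A in x..(1:ℝ), f A)
        = (γ / 2 + δ) * x ^ (γ + 2 * δ) * ((x ^ (-δ) - 1) / δ) := by
      rw [intervalIntegral.integral_congr heq2, intervalIntegral.integral_const_mul,
        integral_rpow (Or.inr ⟨by linarith, by
          rw [Set.uIcc_of_le hxle]; intro h; exact absurd h.1 (not_le.mpr hx)⟩),
        show -δ - 1 + 1 = -δ by ring, Real.one_rpow]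
      rw [show ((1:ℝ) - x ^ (-δ)) / (-δ) = (x ^ (-δ) - 1) / δ by
        rw [div_neg, ← neg_div, neg_sub]]
    have hval : (∫ A in Set.Ioo (0:ℝ) 1, f A)
        = x ^ (γ + δ) * ((γ / 2 + δ) / (γ + δ))
          + (γ / 2 + δ) / δ * (x ^ (γ + δ) - x ^ (γ + 2 * δ)) := by
      have hxx : x ^ (γ + 2 * δ) * x ^ (-δ) = x ^ (γ + δ) := by
        rw [← Real.rpow_add hx, show γ + 2 * δ + -δ = γ + δ by ring]
      rw [hIoo, hsplit, hv1, hv2,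
        show (γ / 2 + δ) * x ^ (γ + 2 * δ) * ((x ^ (-δ) - 1) / δ)
          = (γ / 2 + δ) / δ * (x ^ (γ + 2 * δ) * x ^ (-δ) - x ^ (γ + 2 * δ)) by ring, hxx]
      ring
    have hmono : x ^ (γ + 2 * δ) ≤ x ^ (γ + δ) :=
      Real.rpow_le_rpow_of_exponent_ge hx hxle (by linarith)
    have hxp : 0 < x ^ (γ + δ) := Real.rpow_pos_of_pos hx _
    rw [min_eq_right hxle]
    constructor
    · rw [hval]
      have h1 : (2 + (γ / 2 + δ) / δ)⁻¹ * x ^ (γ + δ) ≤ 1 / 2 * x ^ (γ + δ) := by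
        apply mul_le_mul_of_nonneg_right hCinv hxp.le
      have h2 : 1 / 2 * x ^ (γ + δ) ≤ x ^ (γ + δ) * ((γ / 2 + δ) / (γ + δ)) := by
        rw [mul_comm (1/2)]
        exact mul_le_mul_of_nonneg_left hc_ge hxp.le
      have h3 : 0 ≤ (γ / 2 + δ) / δ * (x ^ (γ + δ) - x ^ (γ + 2 * δ)) :=
        mul_nonneg hCnn (sub_nonneg.mpr hmono)
      linarith
    · rw [hval]
      have h2 : x ^ (γ + δ) * ((γ / 2 + δ) / (γ + δ)) ≤ x ^ (γ + δ) :=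
        (mul_le_of_le_one_right hxp.le hc_le)
      have h3 : (γ / 2 + δ) / δ * (x ^ (γ + δ) - x ^ (γ + 2 * δ))
          ≤ (γ / 2 + δ) / δ * x ^ (γ + δ) := by
        apply mul_le_mul_of_nonneg_left _ hCnn
        have := (Real.rpow_pos_of_pos hx (γ + 2 * δ)).le
        linarith
      linarith [hxp, h2, h3]
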